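/- For every ε > 0 there exist δ₀ > 0 and C > 0, depending only on ε, such that for all 0 < δ ≤ δ₀ the following holds. Let a : [1,∞) → ℝ and h, γ : [1,∞) → Sym₂ be differentiable with γ(λ) invertible for all λ, let α : [1,∞) → Sym₂ be continuous, and suppose that for all λ ≥ 1: a'(λ) = −λ⁻²·( a(λ)² + tr((γ(λ)⁻¹ h(λ))²) ); h'(λ) = −2 λ⁻² h(λ) γ(λ)⁻¹ h(λ) − λ² α(λ); γ'(λ) = λ⁻² a(λ) γ(λ) + 2 λ⁻² h(λ); together with ‖λ² α(λ)‖ ≤ δ λ^(−1−ε) for all λ ≥ 1, |a(1)| ≤ δ, ‖h(1)‖ ≤ δ, and ‖γ(1) − I‖ ≤ 1/4. Then for all λ ≥ 1 one has |a(λ)| ≤ C δ, ‖h(λ)‖ ≤ C δ, and ‖γ(λ) − γ(1)‖ ≤ C δ; moreover there exist a_∞ ∈ ℝ and h_∞, γ_∞ ∈ Sym₂ such that a(λ) → a_∞, h(λ) → h_∞, and γ(λ) → γ_∞ as λ → ∞, and γ_∞ is positive definite. -/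

import Mathlib

open scoped Matrix.Norms.L2Operator
open Filter

namespace PenroseAux

open Set Matrix Topology

noncomputable section


abbrev E2 := Matrix (Fin 2) (Fin 2) ℝ

lemma norm_one_E2 : ‖(1 : E2)‖ = 1 := by
  rw [Matrix.cstar_norm_def, _root_.map_one]
  exact norm_one

lemma coord_le_norm (y : EuclideanSpace ℝ (Fin 2)) (i : Fin 2) : |y i| ≤ ‖y‖ := by
  have h := abs_real_inner_le_norm (EuclideanSpace.single i (1:ℝ)) y
  simpa [EuclideanSpace.inner_single_left] using h

lemma entry_le_norm (M : E2) (i j : Fin 2) : |M i j| ≤ ‖M‖ := by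
  classical
  have h1 := M.l2_opNorm_mulVec (EuclideanSpace.single j 1)
  have h2 := coord_le_norm ((EuclideanSpace.equiv (Fin 2) ℝ).symm (M *ᵥ (EuclideanSpace.single j 1))) i
  have h3 : ((EuclideanSpace.equiv (Fin 2) ℝ).symm (M *ᵥ (EuclideanSpace.single j 1))) i = M i j := by
    show (M *ᵥ ((EuclideanSpace.single j 1) : Fin 2 → ℝ)) i = M i j
    have he : ((EuclideanSpace.single j (1:ℝ)) : Fin 2 → ℝ) = Pi.single j 1 := by
      ext k; simp [EuclideanSpace.single_apply, Pi.single_apply]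
    rw [he, Matrix.mulVec_single]
    simp
  rw [h3] at h2
  simpa [EuclideanSpace.norm_single] using h2.trans h1

lemma abs_trace_le (M : E2) : |Matrix.trace M| ≤ 2 * ‖M‖ := by
  rw [Matrix.trace_fin_two]
  calc |M 0 0 + M 1 1| ≤ |M 0 0| + |M 1 1| := abs_add_le _ _
    _ ≤ ‖M‖ + ‖M‖ := add_le_add (entry_le_norm M 0 0) (entry_le_norm M 1 1)
    _ = 2 * ‖M‖ := by ring

lemma inv_norm_le {γ : E2} (hu : IsUnit γ) (hn : ‖1 - γ‖ ≤ 1/2) : ‖γ⁻¹‖ ≤ 2 := by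
  have hdet : IsUnit γ.det := (Matrix.isUnit_iff_isUnit_det γ).mp hu
  have h1 : γ⁻¹ * γ = 1 := Matrix.nonsing_inv_mul γ hdet
  have h2 : γ⁻¹ = 1 + γ⁻¹ * (1 - γ) := by
    rw [mul_sub, h1, mul_one]; abel
  have hmul := norm_mul_le γ⁻¹ (1 - γ)
  have hmul2 : ‖γ⁻¹‖ * ‖1 - γ‖ ≤ ‖γ⁻¹‖ * (1/2) :=
    mul_le_mul_of_nonneg_left hn (norm_nonneg _)
  have h3 : ‖γ⁻¹‖ ≤ 1 + ‖γ⁻¹‖ * (1/2) := by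
    calc ‖γ⁻¹‖ = ‖(1 : E2) + γ⁻¹ * (1 - γ)‖ := by rw [← h2]
      _ ≤ ‖(1:E2)‖ + ‖γ⁻¹ * (1 - γ)‖ := norm_add_le _ _
      _ ≤ 1 + ‖γ⁻¹‖ * (1/2) := by rw [norm_one_E2]; linarith
  linarith

lemma dot_mulVec_le (M : E2) (x : Fin 2 → ℝ) :
    |x ⬝ᵥ (M *ᵥ x)| ≤ ‖M‖ * (x ⬝ᵥ x) := by
  set y : EuclideanSpace ℝ (Fin 2) := (WithLp.equiv 2 _).symm x with hy
  have hxy : x ⬝ᵥ (M *ᵥ x)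
      = (inner ℝ y ((EuclideanSpace.equiv (Fin 2) ℝ).symm (M *ᵥ x)) : ℝ) := by
    simp [PiLp.inner_apply, dotProduct]
    simp [hy]; ring
  have hyy : x ⬝ᵥ x = ‖y‖ ^ 2 := by
    rw [← real_inner_self_eq_norm_sq]
    simp only [PiLp.inner_apply, dotProduct, hy, RCLike.inner_apply, conj_trivial]
    rfl
  rw [hxy, hyy]
  calc (|inner ℝ y ((EuclideanSpace.equiv (Fin 2) ℝ).symm (M *ᵥ x))| : ℝ)
      ≤ ‖y‖ * ‖(EuclideanSpace.equiv (Fin 2) ℝ).symm (M *ᵥ x)‖ := abs_real_inner_le_norm _ _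
    _ ≤ ‖y‖ * (‖M‖ * ‖y‖) :=
        mul_le_mul_of_nonneg_left (M.l2_opNorm_mulVec y) (norm_nonneg _)
    _ = ‖M‖ * ‖y‖ ^ 2 := by ring

lemma posDef_of_norm_sub_one_lt {M : E2} (hs : M.IsSymm) (hn : ‖M - 1‖ < 1) : M.PosDef := by
  rw [Matrix.posDef_iff_dotProduct_mulVec]
  constructor
  · show Mᴴ = M
    rw [Matrix.conjTranspose]
    exact (Matrix.conjTranspose_eq_transpose_of_trivial M).trans hs
  · intro x hx
    have hpos : 0 < x ⬝ᵥ x := by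
      obtain ⟨i, hi⟩ := Function.ne_iff.mp hx
      have hii : (0:ℝ) < x i * x i := mul_self_pos.mpr (by simpa using hi)
      have : (0:ℝ) < ∑ j, x j * x j :=
        Finset.sum_pos' (fun j _ => mul_self_nonneg (x j)) ⟨i, Finset.mem_univ i, hii⟩
      simpa [dotProduct] using this
    have hsplit : x ⬝ᵥ (M *ᵥ x) = x ⬝ᵥ x + x ⬝ᵥ ((M - 1) *ᵥ x) := by
      rw [Matrix.sub_mulVec, dotProduct_sub, Matrix.one_mulVec]
      ring
    have hb := dot_mulVec_le (M - 1) x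
    have h2 : -(‖M - 1‖ * (x ⬝ᵥ x)) ≤ x ⬝ᵥ ((M - 1) *ᵥ x) := neg_le_of_abs_le hb
    have h3 := mul_lt_mul_of_pos_right hn hpos
    simp only [star_trivial]
    rw [hsplit]
    nlinarith [norm_nonneg (M - 1)]


-- barrier derivative lemmas

lemma hasDerivAt_B (c ε : ℝ) {l : ℝ} (hl : (1:ℝ) ≤ l) :
    HasDerivAt (fun x : ℝ => c * Real.exp (5*(1 - x⁻¹) + (1 - x ^ (-ε))))
      ((c * Real.exp (5*(1 - l⁻¹) + (1 - l ^ (-ε)))) * (5 * (l^2)⁻¹ + ε * l ^ (-1 - ε))) l := by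
  have hne : l ≠ 0 := by intro hx; rw [hx] at hl; norm_num at hl
  have h1 : HasDerivAt (fun x : ℝ => 5*(1 - x⁻¹)) (5 * (l^2)⁻¹) l := by
    have := ((hasDerivAt_const l (1:ℝ)).sub (hasDerivAt_inv hne)).const_mul (5:ℝ)
    refine this.congr_deriv ?_; ring
  have h2 : HasDerivAt (fun x : ℝ => 1 - x ^ (-ε)) (ε * l ^ (-1 - ε)) l := by
    have := (hasDerivAt_const l (1:ℝ)).sub (Real.hasDerivAt_rpow_const (p := -ε) (Or.inl hne))
    refine this.congr_deriv ?_
    rw [show -ε - 1 = -1 - ε by ring]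
    ring
  have h3 := ((h1.add h2).exp).const_mul c
  refine h3.congr_deriv ?_
  simp only [Pi.add_apply]
  ring

lemma hasDerivAt_Psi (K d ε : ℝ) (hε : ε ≠ 0) {l : ℝ} (hl : (1:ℝ) ≤ l) :
    HasDerivAt (fun x : ℝ => -(K * x⁻¹) - (d/ε) * x ^ (-ε))
      (K * (l^2)⁻¹ + d * l ^ (-1 - ε)) l := by
  have hne : l ≠ 0 := by intro hx; rw [hx] at hl; norm_num at hl
  have h1 : HasDerivAt (fun x : ℝ => -(K * x⁻¹)) (K * (l^2)⁻¹) l := by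
    have := ((hasDerivAt_inv hne).const_mul K).neg
    refine this.congr_deriv ?_; ring
  have h2 : HasDerivAt (fun x : ℝ => (d/ε) * x ^ (-ε)) (-(d * l ^ (-1-ε))) l := by
    have := (Real.hasDerivAt_rpow_const (p := -ε) (x := l) (Or.inl hne)).const_mul (d/ε)
    refine this.congr_deriv ?_
    rw [show -ε - 1 = -1 - ε by ring]
    field_simp
  have h3 := h1.sub h2
  refine h3.congr_deriv ?_
  ring

end

end PenroseAux

open PenroseAux Topology Set Matrix

set_option maxHeartbeats 1000000 in
/-- ODE content of Lemma 4.1: asymptotics of the expansion correction `a`,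
shear components `h`, and metric components `γ` (symmetric 2×2 matrices, with
the L2 operator norm on matrices) along an affinely parametrized null
hypersurface, with inhomogeneity `λ² α` from the Weyl curvature. -/
theorem penrose_null_structure_asymptotics :
    ∀ ε : ℝ, 0 < ε → ∃ δ₀ > (0:ℝ), ∃ C > (0:ℝ), ∀ δ : ℝ, 0 < δ → δ ≤ δ₀ →
    ∀ (a : ℝ → ℝ) (h γ α : ℝ → Matrix (Fin 2) (Fin 2) ℝ),
      (∀ l, (h l).IsSymm) → (∀ l, (γ l).IsSymm) → (∀ l, (α l).IsSymm) →
      (∀ l ≥ (1:ℝ), IsUnit (γ l)) →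
      ContinuousOn α (Set.Ici 1) →
      (∀ l ≥ (1:ℝ), HasDerivAt a
        (-(l ^ 2)⁻¹ * ((a l) ^ 2 + Matrix.trace (((γ l)⁻¹ * h l) ^ 2))) l) →
      (∀ l ≥ (1:ℝ), HasDerivAt h
        ((-(2 * (l ^ 2)⁻¹)) • (h l * (γ l)⁻¹ * h l) - (l ^ 2) • α l) l) →
      (∀ l ≥ (1:ℝ), HasDerivAt γ
        (((l ^ 2)⁻¹ * a l) • γ l + (2 * (l ^ 2)⁻¹) • h l) l) →
      (∀ l ≥ (1:ℝ), ‖(l ^ 2) • α l‖ ≤ δ * l ^ (-1 - ε)) →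
      |a 1| ≤ δ → ‖h 1‖ ≤ δ → ‖γ 1 - 1‖ ≤ 1 / 4 →
      ((∀ l ≥ (1:ℝ), |a l| ≤ C * δ ∧ ‖h l‖ ≤ C * δ ∧ ‖γ l - γ 1‖ ≤ C * δ) ∧
        ∃ (aInf : ℝ) (hInf gInf : Matrix (Fin 2) (Fin 2) ℝ),
          hInf.IsSymm ∧ gInf.IsSymm ∧
          Tendsto a atTop (nhds aInf) ∧
          Tendsto h atTop (nhds hInf) ∧
          Tendsto γ atTop (nhds gInf) ∧
          gInf.PosDef) := by
  intro ε hε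
  set C : ℝ := (1 + ε⁻¹) * Real.exp 6 with hC_def
  have hεinv : 0 < ε⁻¹ := inv_pos.mpr hε
  have hC : 0 < C := by positivity
  refine ⟨1/(4*C), by positivity, C, hC, ?_⟩
  intro δ hδ hδ0 a h γ α hsymh hsymγ hsymα hunit hcont hda hdh hdγ hα ha1 hh1 hγ1
  have hCδ4 : C * δ ≤ 1/4 := by
    have : C * δ ≤ C * (1/(4*C)) := mul_le_mul_of_nonneg_left hδ0 hC.le
    calc C * δ ≤ C * (1/(4*C)) := this
      _ = 1/4 := by field_simp
  -- bundled function and derivative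
  set A' : ℝ → ℝ := fun l => -(l ^ 2)⁻¹ * ((a l) ^ 2 + Matrix.trace (((γ l)⁻¹ * h l) ^ 2)) with hA'def
  set H' : ℝ → E2 := fun l => (-(2 * (l ^ 2)⁻¹)) • (h l * (γ l)⁻¹ * h l) - (l ^ 2) • α l with hH'def
  set G' : ℝ → E2 := fun l => ((l ^ 2)⁻¹ * a l) • γ l + (2 * (l ^ 2)⁻¹) • h l with hG'def
  set F : ℝ → ℝ × (E2 × E2) := fun l => (a l, (h l, γ l - γ 1)) with hFdef
  set F' : ℝ → ℝ × (E2 × E2) := fun l => (A' l, (H' l, G' l)) with hF'def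
  have hF : ∀ l ≥ (1:ℝ), HasDerivAt F (F' l) l := fun l hl =>
    (hda l hl).prodMk ((hdh l hl).prodMk ((hdγ l hl).sub_const (γ 1)))
  have normF : ∀ l, ‖F l‖ = max |a l| (max ‖h l‖ ‖γ l - γ 1‖) := by
    intro l
    rw [Prod.norm_def, Prod.norm_def, Real.norm_eq_abs]
  have normF' : ∀ l, ‖F' l‖ = max |A' l| (max ‖H' l‖ ‖G' l‖) := by
    intro l
    rw [Prod.norm_def, Prod.norm_def, Real.norm_eq_abs]
  -- the key pointwise estimate
  have key : ∀ l, 1 ≤ l → ∀ b : ℝ, |a l| ≤ b → ‖h l‖ ≤ b → ‖γ l - γ 1‖ ≤ b → b ≤ 1/4 →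
      ‖F' l‖ ≤ 5 * (l^2)⁻¹ * b + δ * l ^ (-1 - ε) := by
    intro l hl b hba hbh hbg hb4
    have hb0 : 0 ≤ b := (abs_nonneg _).trans hba
    have hl0 : 0 < l := lt_of_lt_of_le one_pos hl
    have hil2 : (0:ℝ) ≤ (l^2)⁻¹ := by positivity
    have hrp : 0 < l ^ (-1-ε) := Real.rpow_pos_of_pos hl0 _
    have hαl : ‖(l^2) • α l‖ ≤ δ * l ^ (-1-ε) := hα l hl
    have hone : ‖(1:E2) - γ l‖ ≤ 1/2 := by
      have e : (1:E2) - γ l = (1 - γ 1) + (γ 1 - γ l) := by abel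
      rw [e]
      have h1 := norm_add_le (1 - γ 1 : E2) (γ 1 - γ l)
      rw [norm_sub_rev (1:E2) (γ 1), norm_sub_rev (γ 1) (γ l)] at h1
      linarith
    have hinv : ‖(γ l)⁻¹‖ ≤ 2 := inv_norm_le (hunit l hl) hone
    have hγn : ‖γ l‖ ≤ 3/2 := by
      have e : γ l = 1 - ((1:E2) - γ l) := by abel
      calc ‖γ l‖ = ‖(1:E2) - ((1:E2) - γ l)‖ := by rw [← e]
        _ ≤ ‖(1:E2)‖ + ‖(1:E2) - γ l‖ := norm_sub_le _ _
        _ ≤ 3/2 := by rw [norm_one_E2]; linarith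
    have hM : ‖(γ l)⁻¹ * h l‖ ≤ 2 * b :=
      (norm_mul_le _ _).trans (mul_le_mul hinv hbh (norm_nonneg _) (by norm_num))
    have hA : |A' l| ≤ 5 * (l^2)⁻¹ * b + δ * l^(-1-ε) := by
      have htr : |Matrix.trace (((γ l)⁻¹ * h l) ^ 2)| ≤ 8 * b^2 := by
        have h1 := abs_trace_le (((γ l)⁻¹ * h l) ^ 2)
        have h2 : ‖((γ l)⁻¹ * h l) ^ 2‖ ≤ (2*b) * (2*b) := by
          rw [sq]
          exact (norm_mul_le _ _).trans (mul_le_mul hM hM (norm_nonneg _) (by linarith))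
        nlinarith
      have hsq : |(a l)^2| ≤ b^2 := by
        rw [abs_pow]
        exact pow_le_pow_left₀ (abs_nonneg _) hba 2
      have h3 : |A' l| ≤ (l^2)⁻¹ * (9 * b^2) := by
        rw [hA'def]
        simp only []
        rw [abs_mul, abs_neg, abs_inv, abs_pow, abs_of_pos hl0]
        apply mul_le_mul_of_nonneg_left _ hil2
        calc |(a l)^2 + Matrix.trace (((γ l)⁻¹ * h l) ^ 2)|
            ≤ |(a l)^2| + |Matrix.trace (((γ l)⁻¹ * h l) ^ 2)| := abs_add_le _ _
          _ ≤ 9 * b^2 := by linarith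
      have h9 : 9 * b^2 ≤ 5 * b := by nlinarith
      have h10 : (l^2)⁻¹ * (9*b^2) ≤ (l^2)⁻¹ * (5*b) := mul_le_mul_of_nonneg_left h9 hil2
      have h11 : 0 ≤ δ * l^(-1-ε) := by positivity
      calc |A' l| ≤ (l^2)⁻¹ * (9*b^2) := h3
        _ ≤ (l^2)⁻¹ * (5*b) := h10
        _ = 5 * (l^2)⁻¹ * b := by ring
        _ ≤ 5 * (l^2)⁻¹ * b + δ * l^(-1-ε) := by linarith
    have hH : ‖H' l‖ ≤ 5 * (l^2)⁻¹ * b + δ * l^(-1-ε) := by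
      have hX : ‖h l * (γ l)⁻¹ * h l‖ ≤ 2 * b^2 := by
        have h1 : ‖h l * (γ l)⁻¹‖ ≤ b * 2 :=
          (norm_mul_le _ _).trans (mul_le_mul hbh hinv (norm_nonneg _) hb0)
        calc ‖h l * (γ l)⁻¹ * h l‖ ≤ ‖h l * (γ l)⁻¹‖ * ‖h l‖ := norm_mul_le _ _
          _ ≤ (b * 2) * b := mul_le_mul h1 hbh (norm_nonneg _) (by linarith)
          _ = 2 * b^2 := by ring
      have h1 : ‖H' l‖ ≤ ‖(-(2 * (l ^ 2)⁻¹)) • (h l * (γ l)⁻¹ * h l)‖ + ‖(l^2) • α l‖ :=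
        norm_sub_le _ _
      have h2 : ‖(-(2 * (l ^ 2)⁻¹)) • (h l * (γ l)⁻¹ * h l)‖ = 2 * (l^2)⁻¹ * ‖h l * (γ l)⁻¹ * h l‖ := by
        rw [norm_smul, Real.norm_eq_abs, abs_neg, abs_of_nonneg (by positivity)]
      have h3 : 2 * (l^2)⁻¹ * ‖h l * (γ l)⁻¹ * h l‖ ≤ 2 * (l^2)⁻¹ * (2*b^2) := by
        apply mul_le_mul_of_nonneg_left hX (by positivity)
      have h9 : 4 * b^2 ≤ 5 * b := by nlinarith
      have h4 : 2 * (l^2)⁻¹ * (2*b^2) ≤ 5 * (l^2)⁻¹ * b := by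
        have := mul_le_mul_of_nonneg_left h9 hil2
        calc 2 * (l^2)⁻¹ * (2*b^2) = (l^2)⁻¹ * (4 * b^2) := by ring
          _ ≤ (l^2)⁻¹ * (5*b) := this
          _ = 5 * (l^2)⁻¹ * b := by ring
      rw [h2] at h1
      linarith
    have hG : ‖G' l‖ ≤ 5 * (l^2)⁻¹ * b + δ * l^(-1-ε) := by
      have h1 : ‖G' l‖ ≤ ‖((l ^ 2)⁻¹ * a l) • γ l‖ + ‖(2 * (l ^ 2)⁻¹) • h l‖ := norm_add_le _ _
      have h2 : ‖((l ^ 2)⁻¹ * a l) • γ l‖ ≤ (l^2)⁻¹ * b * (3/2) := by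
        rw [norm_smul, Real.norm_eq_abs, abs_mul, abs_inv, abs_pow, abs_of_pos hl0]
        apply mul_le_mul _ hγn (norm_nonneg _) (by positivity)
        exact mul_le_mul_of_nonneg_left hba hil2
      have h3 : ‖(2 * (l ^ 2)⁻¹) • h l‖ ≤ 2 * (l^2)⁻¹ * b := by
        rw [norm_smul, Real.norm_eq_abs, abs_of_nonneg (by positivity)]
        exact mul_le_mul_of_nonneg_left hbh (by positivity)
      have h4 : (l^2)⁻¹ * b * (3/2) + 2 * (l^2)⁻¹ * b ≤ 5 * (l^2)⁻¹ * b := by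
        have h9 : b * (3/2) + 2 * b ≤ 5 * b := by linarith
        have := mul_le_mul_of_nonneg_left h9 hil2
        calc (l^2)⁻¹ * b * (3/2) + 2 * (l^2)⁻¹ * b = (l^2)⁻¹ * (b * (3/2) + 2*b) := by ring
          _ ≤ (l^2)⁻¹ * (5*b) := this
          _ = 5 * (l^2)⁻¹ * b := by ring
      have h5 : 0 ≤ δ * l^(-1-ε) := by positivity
      linarith
    rw [normF' l]
    exact max_le hA (max_le hH hG)
  -- the barrier function
  set B : ℝ → ℝ := fun x => (δ * (1 + ε⁻¹)) * Real.exp (5*(1 - x⁻¹) + (1 - x ^ (-ε))) with hBdef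
  have hθ : ∀ l : ℝ, 1 ≤ l → 0 ≤ 5*(1 - l⁻¹) + (1 - l ^ (-ε)) ∧ 5*(1 - l⁻¹) + (1 - l ^ (-ε)) ≤ 6 := by
    intro l hl
    have hl0 : 0 < l := lt_of_lt_of_le one_pos hl
    have h1 : l⁻¹ ≤ 1 := by
      rw [inv_le_one_iff₀]; right; exact hl
    have h2 : 0 < l⁻¹ := by positivity
    have h3 : l ^ (-ε) ≤ 1 := Real.rpow_le_one_of_one_le_of_nonpos hl (by linarith)
    have h4 : 0 < l ^ (-ε) := Real.rpow_pos_of_pos hl0 _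
    constructor <;> nlinarith
  have hBle : ∀ l : ℝ, 1 ≤ l → B l ≤ C * δ := by
    intro l hl
    have := (hθ l hl).2
    calc B l ≤ (δ * (1 + ε⁻¹)) * Real.exp 6 := by
          apply mul_le_mul_of_nonneg_left (Real.exp_le_exp.mpr this) (by positivity)
      _ = C * δ := by rw [hC_def]; ring
  have hB4 : ∀ l : ℝ, 1 ≤ l → B l ≤ 1/4 := fun l hl => (hBle l hl).trans hCδ4
  have hBge : ∀ l : ℝ, 1 ≤ l → δ * (1 + ε⁻¹) ≤ B l := by
    intro l hl
    have h1 : (1:ℝ) ≤ Real.exp (5*(1 - l⁻¹) + (1 - l ^ (-ε))) :=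
      calc (1:ℝ) = Real.exp 0 := Real.exp_zero.symm
        _ ≤ Real.exp (5*(1 - l⁻¹) + (1 - l ^ (-ε))) := Real.exp_le_exp.mpr (hθ l hl).1
    calc δ * (1 + ε⁻¹) = (δ * (1 + ε⁻¹)) * 1 := by ring
      _ ≤ B l := mul_le_mul_of_nonneg_left h1 (by positivity)
  -- main fencing argument
  have claim1 : ∀ l, 1 ≤ l → ‖F l‖ ≤ B l := by
    intro L hL
    have happ := image_norm_le_of_norm_deriv_right_lt_deriv_boundary'
      (f := F) (f' := F') (a := 1) (b := L) (B := B)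
      (B' := fun x => B x * (5 * (x^2)⁻¹ + ε * x ^ (-1 - ε)))
      (fun x hx => (hF x hx.1).continuousAt.continuousWithinAt)
      (fun x hx => (hF x hx.1).hasDerivWithinAt)
      (by -- ‖F 1‖ ≤ B 1
        rw [normF 1]
        have h0 : ‖γ 1 - γ 1‖ = 0 := by rw [sub_self, norm_zero]
        have hB1 : δ ≤ B 1 := by
          have := hBge 1 le_rfl
          nlinarith
        apply max_le (ha1.trans hB1)
        apply max_le (hh1.trans hB1)
        rw [h0]; linarith)
      (fun x hx => (hasDerivAt_B (δ * (1 + ε⁻¹)) ε hx.1).continuousAt.continuousWithinAt)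
      (fun x hx => (hasDerivAt_B (δ * (1 + ε⁻¹)) ε hx.1).hasDerivWithinAt)
      ?_
    · exact happ ⟨hL, le_rfl⟩
    · intro x hx heq
      have hx1 : (1:ℝ) ≤ x := hx.1
      have hx0 : (0:ℝ) < x := lt_of_lt_of_le one_pos hx1
      have h1 : |a x| ≤ B x := by
        rw [← heq, ← Real.norm_eq_abs]; exact norm_fst_le (F x)
      have h2 : ‖h x‖ ≤ B x := by
        rw [← heq]
        exact (norm_fst_le (F x).2).trans (norm_snd_le (F x))
      have h3 : ‖γ x - γ 1‖ ≤ B x := by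
        rw [← heq]
        exact (norm_snd_le (F x).2).trans (norm_snd_le (F x))
      have hkey := key x hx1 (B x) h1 h2 h3 (hB4 x hx1)
      refine lt_of_le_of_lt hkey ?_
      have hδB : δ < ε * B x := by
        have h4 := hBge x hx1
        have h5 : ε * (δ * (1 + ε⁻¹)) = δ * ε + δ := by
          field_simp
        nlinarith
      have hrp : 0 < x ^ (-1-ε) := Real.rpow_pos_of_pos hx0 _
      have h6 : δ * x^(-1-ε) < (ε * B x) * x^(-1-ε) := by
        exact mul_lt_mul_of_pos_right hδB hrp
      calc 5 * (x^2)⁻¹ * B x + δ * x ^ (-1-ε)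
          < 5 * (x^2)⁻¹ * B x + (ε * B x) * x^(-1-ε) := by linarith
        _ = B x * (5 * (x^2)⁻¹ + ε * x ^ (-1 - ε)) := by ring
  -- the uniform bounds
  have hbnds : ∀ l, 1 ≤ l → |a l| ≤ C * δ ∧ ‖h l‖ ≤ C * δ ∧ ‖γ l - γ 1‖ ≤ C * δ := by
    intro l hl
    have h0 := (claim1 l hl).trans (hBle l hl)
    rw [normF l] at h0
    exact ⟨(le_max_left _ _).trans h0,
      ((le_max_left _ _).trans (le_max_right _ _)).trans h0,
      ((le_max_right _ _).trans (le_max_right _ _)).trans h0⟩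
  refine ⟨fun l hl => hbnds l hl, ?_⟩
  -- convergence
  have step2 : ∀ l, 1 ≤ l → ‖F' l‖ ≤ 5*C*δ * (l^2)⁻¹ + δ * l ^ (-1 - ε) := by
    intro l hl
    obtain ⟨b1, b2, b3⟩ := hbnds l hl
    have := key l hl (C*δ) b1 b2 b3 hCδ4
    calc ‖F' l‖ ≤ 5 * (l^2)⁻¹ * (C*δ) + δ * l ^ (-1-ε) := this
      _ = 5*C*δ * (l^2)⁻¹ + δ * l ^ (-1-ε) := by ring
  have step3 : ∀ s, 1 ≤ s → ∀ t, s ≤ t → ‖F t - F s‖ ≤ 5*C*δ * s⁻¹ + (δ/ε) * s ^ (-ε) := by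
    intro s hs t hst
    set Ψ : ℝ → ℝ := fun x => -((5*C*δ) * x⁻¹) - (δ/ε) * x ^ (-ε) with hΨdef
    have happ := image_norm_le_of_norm_deriv_right_le_deriv_boundary'
      (f := fun u => F u - F s) (f' := F') (a := s) (b := t)
      (B := fun u => Ψ u - Ψ s)
      (B' := fun u => 5*C*δ * (u^2)⁻¹ + δ * u ^ (-1 - ε))
      (fun x hx => ((hF x (hs.trans hx.1)).continuousAt.continuousWithinAt).sub
        continuousWithinAt_const)
      (fun x hx => ((hF x (hs.trans hx.1)).sub_const (F s)).hasDerivWithinAt)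
      (by simp)
      (fun x hx => (((hasDerivAt_Psi (5*C*δ) δ ε (ne_of_gt hε) (hs.trans hx.1)).sub_const
        (Ψ s)).continuousAt).continuousWithinAt)
      (fun x hx => ((hasDerivAt_Psi (5*C*δ) δ ε (ne_of_gt hε) (hs.trans hx.1)).sub_const
        (Ψ s)).hasDerivWithinAt)
      (fun x hx => step2 x (hs.trans hx.1))
    have h1 := happ ⟨hst, le_rfl⟩
    have hs0 : 0 < s := lt_of_lt_of_le one_pos hs
    have ht0 : 0 < t := lt_of_lt_of_le hs0 hst
    have hΨt : Ψ t ≤ 0 := by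
      have h2 : 0 < t⁻¹ := by positivity
      have h3 : 0 < t ^ (-ε) := Real.rpow_pos_of_pos ht0 _
      have h4 : 0 ≤ (δ/ε) := by positivity
      have := mul_nonneg h4 h3.le
      have h5 : 0 ≤ (5*C*δ) * t⁻¹ := by positivity
      rw [hΨdef]
      simp only []
      linarith
    have : Ψ t - Ψ s ≤ -Ψ s := by linarith
    calc ‖F t - F s‖ ≤ Ψ t - Ψ s := h1
      _ ≤ -Ψ s := this
      _ = 5*C*δ * s⁻¹ + (δ/ε) * s ^ (-ε) := by rw [hΨdef]; ring
  -- Cauchy along atTop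
  have hD : Tendsto (fun s : ℝ => 5*C*δ * s⁻¹ + (δ/ε) * s ^ (-ε)) atTop (𝓝 0) := by
    have h1 : Tendsto (fun s : ℝ => 5*C*δ * s⁻¹) atTop (𝓝 (5*C*δ * 0)) :=
      tendsto_inv_atTop_zero.const_mul _
    have h2 : Tendsto (fun s : ℝ => (δ/ε) * s ^ (-ε)) atTop (𝓝 ((δ/ε) * 0)) :=
      (tendsto_rpow_neg_atTop hε).const_mul _
    have := h1.add h2
    simpa using this
  have hcauchy : Cauchy (map F atTop) := by
    rw [Metric.cauchy_iff]
    refine ⟨map_neBot, ?_⟩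
    intro r hr
    have hev : ∀ᶠ s : ℝ in atTop, (5*C*δ * s⁻¹ + (δ/ε) * s ^ (-ε)) < r/2 :=
      hD.eventually (gt_mem_nhds (by linarith : (0:ℝ) < r/2))
    obtain ⟨s₀, hs₀⟩ := (hev.and (eventually_ge_atTop (1:ℝ))).exists
    refine ⟨F '' Ici s₀, image_mem_map (Ici_mem_atTop s₀), ?_⟩
    rintro x ⟨u, hu, rfl⟩ y ⟨v, hv, rfl⟩
    have h1 : dist (F u) (F s₀) ≤ 5*C*δ * s₀⁻¹ + (δ/ε) * s₀ ^ (-ε) := by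
      rw [dist_eq_norm]
      exact step3 s₀ hs₀.2 u hu
    have h2 : dist (F s₀) (F v) ≤ 5*C*δ * s₀⁻¹ + (δ/ε) * s₀ ^ (-ε) := by
      rw [dist_comm, dist_eq_norm]
      exact step3 s₀ hs₀.2 v hv
    calc dist (F u) (F v) ≤ dist (F u) (F s₀) + dist (F s₀) (F v) := dist_triangle _ _ _
      _ < r := by linarith [hs₀.1]
  obtain ⟨p, hp⟩ := CompleteSpace.complete hcauchy
  have htend : Tendsto F atTop (𝓝 p) := hp
  have hta : Tendsto a atTop (𝓝 p.1) := (continuous_fst.tendsto p).comp htend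
  have hth : Tendsto h atTop (𝓝 p.2.1) :=
    (continuous_fst.tendsto p.2).comp ((continuous_snd.tendsto p).comp htend)
  have htg' : Tendsto (fun l => γ l - γ 1) atTop (𝓝 p.2.2) :=
    (continuous_snd.tendsto p.2).comp ((continuous_snd.tendsto p).comp htend)
  have htg : Tendsto γ atTop (𝓝 (p.2.2 + γ 1)) := by
    have h1 := htg'.add_const (γ 1)
    have h2 : (fun l => (γ l - γ 1) + γ 1) = γ := by funext l; abel
    rwa [h2] at h1
  -- symmetry of limits
  have htrans : Continuous (fun M : E2 => Mᵀ) :=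
    LinearMap.continuous_of_finiteDimensional
      ((Matrix.transposeLinearEquiv (Fin 2) (Fin 2) ℝ ℝ).toLinearMap)
  have symlim : ∀ (u : ℝ → E2) (q : E2), (∀ l, (u l).IsSymm) → Tendsto u atTop (𝓝 q) →
      q.IsSymm := by
    intro u q hs ht
    have h1 : Tendsto (fun l => (u l)ᵀ) atTop (𝓝 qᵀ) := (htrans.tendsto q).comp ht
    have h2 : (fun l => (u l)ᵀ) = u := funext fun l => hs l
    rw [h2] at h1
    exact tendsto_nhds_unique h1 ht
  have hsymhInf : (p.2.1).IsSymm := symlim h p.2.1 hsymh hth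
  have hsymgInf : (p.2.2 + γ 1).IsSymm := symlim γ (p.2.2 + γ 1) hsymγ htg
  -- positive definiteness
  have hgb : ‖p.2.2‖ ≤ C * δ := by
    have h1 : Tendsto (fun l => ‖γ l - γ 1‖) atTop (𝓝 ‖p.2.2‖) := htg'.norm
    apply le_of_tendsto h1
    filter_upwards [eventually_ge_atTop (1:ℝ)] with l hl
    exact (hbnds l hl).2.2
  have hposdef : (p.2.2 + γ 1).PosDef := by
    apply posDef_of_norm_sub_one_lt hsymgInf
    have h1 : (p.2.2 + γ 1) - 1 = p.2.2 + (γ 1 - 1) := by abel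
    rw [h1]
    calc ‖p.2.2 + (γ 1 - 1)‖ ≤ ‖p.2.2‖ + ‖γ 1 - 1‖ := norm_add_le _ _
      _ ≤ C * δ + 1/4 := add_le_add hgb hγ1
      _ < 1 := by linarith
  exact ⟨p.1, p.2.1, p.2.2 + γ 1, hsymhInf, hsymgInf, hta, hth, htg, hposdef⟩
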